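/- Let A be a C*-algebra and H a Hilbert A-module such that the C*-algebra K(H) of compact module operators has an identity. Then H is algebraically finitely generated: there exist ξ₁, …, ξₙ ∈ H with H = ∑ᵢ ξᵢ·A. -/

import Mathlib

open scoped RightActions

noncomputable section

/-- The Mathlib (December 2024) notion of a Hilbert C⋆-module with a *right* `A`-action,
copied verbatim (Mathlib's `CStarModule` now has a left action, a different notion). -/
class RightCStarModule (A : outParam <| Type*) (E : Type*) [NonUnitalSemiring A] [StarRing A]
    [Module ℂ A] [AddCommGroup E] [Module ℂ E] [PartialOrder A] [SMul Aᵐᵒᵖ E] [Norm A] [Norm E]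
    extends Inner A E where
  inner_add_right {x} {y} {z} : inner x (y + z) = inner x y + inner x z
  inner_self_nonneg {x} : 0 ≤ inner x x
  inner_self {x} : inner x x = 0 ↔ x = 0
  inner_op_smul_right {a : A} {x y : E} : inner x (y <• a) = inner x y * a
  inner_smul_right_complex {z : ℂ} {x} {y} : inner x (z • y) = z • inner x y
  star_inner x y : star (inner x y) = inner y x
  norm_eq_sqrt_norm_inner_self x : ‖x‖ = √‖inner x x‖

/-- The C*-algebra `K(H)` of "compact" operators on a Hilbert `A`-module `H`: the closed
linear span of the rank-one operators `θ_{x,y} : z ↦ x·⟪y,z⟫`, realized as a set of bounded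
operators on `H`. -/
def compactOperators (A E : Type*) [NonUnitalCStarAlgebra A] [PartialOrder A]
    [StarOrderedRing A] [NormedAddCommGroup E] [NormedSpace ℂ E] [SMul Aᵐᵒᵖ E]
    [RightCStarModule A E] : Set (E →L[ℂ] E) :=
  closure (Submodule.span ℂ
    {T : E →L[ℂ] E | ∃ x y : E, ∀ z, T z = x <• (inner A y z : A)} : Set (E →L[ℂ] E))

namespace RightCStarModule

variable {A E : Type*} [NonUnitalCStarAlgebra A] [PartialOrder A] [StarOrderedRing A]
    [NormedAddCommGroup E] [NormedSpace ℂ E] [SMul Aᵐᵒᵖ E] [RightCStarModule A E]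

local notation "⟪" x ", " y "⟫" => inner A x y

lemma inner_add_left {x y z : E} : ⟪x + y, z⟫ = ⟪x, z⟫ + ⟪y, z⟫ := by
  rw [← star_star (r := ⟪x + y, z⟫)]
  simp only [RightCStarModule.star_inner, RightCStarModule.inner_add_right, star_add]

lemma inner_op_smul_left {a : A} {x y : E} : ⟪x <• a, y⟫ = star a * ⟪x, y⟫ := by
  rw [← RightCStarModule.star_inner, RightCStarModule.inner_op_smul_right, star_mul,
    RightCStarModule.star_inner]

lemma inner_smul_left_complex {z : ℂ} {x y : E} : ⟪z • x, y⟫ = star z • ⟪x, y⟫ := by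
  rw [← RightCStarModule.star_inner, RightCStarModule.inner_smul_right_complex, star_smul,
    RightCStarModule.star_inner]

lemma inner_smul_right_real {z : ℝ} {x y : E} : ⟪x, z • y⟫ = z • ⟪x, y⟫ := by
  have h₁ : z • y = (z : ℂ) • y := by simp
  rw [h₁, RightCStarModule.inner_smul_right_complex]
  simp

lemma inner_smul_left_real {z : ℝ} {x y : E} : ⟪z • x, y⟫ = z • ⟪x, y⟫ := by
  have h₁ : z • x = (z : ℂ) • x := by simp
  rw [h₁, inner_smul_left_complex]
  simp

lemma inner_neg_right {x y : E} : ⟪x, -y⟫ = -⟪x, y⟫ := by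
  rw [← neg_one_smul ℂ y, RightCStarModule.inner_smul_right_complex, neg_one_smul]

lemma inner_sub_right {x y z : E} : ⟪x, y - z⟫ = ⟪x, y⟫ - ⟪x, z⟫ := by
  rw [sub_eq_add_neg, RightCStarModule.inner_add_right, inner_neg_right, ← sub_eq_add_neg]

lemma inner_neg_left {x y : E} : ⟪-x, y⟫ = -⟪x, y⟫ := by
  rw [← RightCStarModule.star_inner, inner_neg_right, star_neg, RightCStarModule.star_inner]

lemma inner_sub_left {x y z : E} : ⟪x - y, z⟫ = ⟪x, z⟫ - ⟪y, z⟫ := by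
  rw [sub_eq_add_neg, inner_add_left, inner_neg_left, ← sub_eq_add_neg]

lemma inner_zero_right {x : E} : ⟪x, 0⟫ = 0 := by
  have := RightCStarModule.inner_add_right (A := A) (x := x) (y := 0) (z := 0)
  simpa using this

lemma inner_zero_left {x : E} : ⟪0, x⟫ = 0 := by
  rw [← RightCStarModule.star_inner, inner_zero_right, star_zero]

lemma isSelfAdjoint_inner_self {x : E} : IsSelfAdjoint ⟪x, x⟫ := RightCStarModule.star_inner _ _

lemma norm_sq_eq {x : E} : ‖x‖ ^ 2 = ‖⟪x, x⟫‖ := by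
  rw [RightCStarModule.norm_eq_sqrt_norm_inner_self (A := A) x, Real.sq_sqrt (norm_nonneg _)]

lemma inner_mul_inner_swap_le {x y : E} : ⟪y, x⟫ * ⟪x, y⟫ ≤ ‖x‖ ^ 2 • ⟪y, y⟫ := by
  rcases eq_or_ne x 0 with h | h
  · simp [h, inner_zero_right, inner_zero_left]
  · have h₁ : ∀ (a : A),
        (0 : A) ≤ ‖x‖ ^ 2 • (a * star a) - ‖x‖ ^ 2 • (a * ⟪x, y⟫)
                  - ‖x‖ ^ 2 • (⟪y, x⟫ * star a) + ‖x‖ ^ 2 • (‖x‖ ^ 2 • ⟪y, y⟫) := fun a => by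
      calc (0 : A) ≤ ⟪x <• star a - ‖x‖ ^ 2 • y, x <• star a - ‖x‖ ^ 2 • y⟫ := by
                      exact RightCStarModule.inner_self_nonneg
            _ = a * ⟪x, x⟫ * star a - ‖x‖ ^ 2 • (a * ⟪x, y⟫)
                  - ‖x‖ ^ 2 • (⟪y, x⟫ * star a) + ‖x‖ ^ 2 • (‖x‖ ^ 2 • ⟪y, y⟫) := by
                      simp only [inner_sub_right, RightCStarModule.inner_op_smul_right,
                        inner_sub_left, inner_op_smul_left, inner_smul_left_real, star_star,
                        mul_sub, sub_mul, mul_smul_comm, smul_mul_assoc, inner_smul_right_real, smul_sub,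
                        mul_assoc]
                      abel
            _ ≤ ‖x‖ ^ 2 • (a * star a) - ‖x‖ ^ 2 • (a * ⟪x, y⟫)
                  - ‖x‖ ^ 2 • (⟪y, x⟫ * star a) + ‖x‖ ^ 2 • (‖x‖ ^ 2 • ⟪y, y⟫) := by
                      gcongr
                      calc _ ≤ ‖⟪x, x⟫‖ • (a * star a) :=
                          CStarAlgebra.star_right_conjugate_le_norm_smul
                            (hb := isSelfAdjoint_inner_self)
                        _ = ‖x‖ ^ 2 • (a * star a) := by rw [norm_sq_eq]
    specialize h₁ ⟪y, x⟫
    simp only [RightCStarModule.star_inner, sub_self, zero_sub, le_neg_add_iff_add_le,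
      add_zero] at h₁
    rwa [smul_le_smul_iff_of_pos_left (pow_pos (norm_pos_iff.mpr h) _)] at h₁

lemma norm_inner_le {x y : E} : ‖⟪x, y⟫‖ ≤ ‖x‖ * ‖y‖ := by
  have := calc ‖⟪x, y⟫‖ ^ 2 = ‖⟪y, x⟫ * ⟪x, y⟫‖ := by
                rw [← RightCStarModule.star_inner x y, CStarRing.norm_star_mul_self, pow_two]
    _ ≤ ‖‖x‖ ^ 2 • ⟪y, y⟫‖ := by
                refine CStarAlgebra.norm_le_norm_of_nonneg_of_le ?_ inner_mul_inner_swap_le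
                rw [← RightCStarModule.star_inner x y]
                exact star_mul_self_nonneg _
    _ = ‖x‖ ^ 2 * ‖y‖ ^ 2 := by
                rw [norm_smul, ← norm_sq_eq, Real.norm_of_nonneg (by positivity)]
    _ = (‖x‖ * ‖y‖) ^ 2 := by ring
  exact (pow_le_pow_iff_left₀ (norm_nonneg _) (by positivity) two_ne_zero).mp this

/-- `z ↦ ⟪y, z⟫` as a continuous linear map. -/
def innerSL (y : E) : E →L[ℂ] A :=
  LinearMap.mkContinuous
    { toFun := fun z => ⟪y, z⟫
      map_add' := fun _ _ => RightCStarModule.inner_add_right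
      map_smul' := fun _ _ => RightCStarModule.inner_smul_right_complex } ‖y‖
    (fun _ => norm_inner_le)

end RightCStarModule

namespace MyAux

set_option linter.unusedSectionVars false

variable {A E : Type*} [NonUnitalCStarAlgebra A] [PartialOrder A] [StarOrderedRing A]
    [NormedAddCommGroup E] [NormedSpace ℂ E] [SMul Aᵐᵒᵖ E] [RightCStarModule A E]

local notation "⟪" x ", " y "⟫" => (inner A x y)

lemma ext_inner {v w : E} (h : ∀ z : E, ⟪z, v⟫ = ⟪z, w⟫) : v = w := by
  have h2 : ⟪v - w, v - w⟫ = 0 := by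
    rw [RightCStarModule.inner_sub_right, h (v - w), sub_self]
  exact sub_eq_zero.mp (RightCStarModule.inner_self.mp h2)

lemma op_smul_add (x : E) (a b : A) : x <• (a + b) = x <• a + x <• b :=
  ext_inner fun z => by
    simp only [RightCStarModule.inner_op_smul_right, RightCStarModule.inner_add_right, mul_add]

lemma op_smul_csmul (x : E) (c : ℂ) (a : A) : x <• (c • a) = c • (x <• a) :=
  ext_inner fun z => by
    simp only [RightCStarModule.inner_op_smul_right, RightCStarModule.inner_smul_right_complex,
      mul_smul_comm]

lemma op_smul_rsmul (x : E) (r : ℝ) (a : A) : x <• (r • a) = r • (x <• a) :=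
  ext_inner fun z => by
    simp only [RightCStarModule.inner_op_smul_right, RightCStarModule.inner_smul_right_real,
      mul_smul_comm]

lemma csmul_op_smul (c : ℂ) (x : E) (a : A) : (c • x) <• a = c • (x <• a) :=
  ext_inner fun z => by
    simp only [RightCStarModule.inner_op_smul_right, RightCStarModule.inner_smul_right_complex,
      smul_mul_assoc]

lemma op_smul_sub (x : E) (a b : A) : x <• (a - b) = x <• a - x <• b :=
  ext_inner fun z => by
    simp only [RightCStarModule.inner_op_smul_right, RightCStarModule.inner_sub_right, mul_sub]

lemma norm_op_smul_le (x : E) (a : A) : ‖x <• a‖ ≤ ‖x‖ * ‖a‖ := by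
  have h1 : ‖x <• a‖ ^ 2 = ‖star a * (⟪x, x⟫ * a)‖ := by
    rw [RightCStarModule.norm_sq_eq]
    congr 1
    simp [mul_assoc, RightCStarModule.inner_op_smul_left, RightCStarModule.inner_op_smul_right]
  have h2 : ‖star a * (⟪x, x⟫ * a)‖ ≤ ‖a‖ * (‖⟪x, x⟫‖ * ‖a‖) :=
    (norm_mul_le _ _).trans (by rw [norm_star]; gcongr; exact norm_mul_le _ _)
  have h3 : ‖⟪x, x⟫‖ = ‖x‖ ^ 2 := (RightCStarModule.norm_sq_eq).symm
  have h4 : ‖x <• a‖ ^ 2 ≤ (‖x‖ * ‖a‖) ^ 2 := by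
    rw [h1]
    calc _ ≤ ‖a‖ * (‖⟪x, x⟫‖ * ‖a‖) := h2
      _ = (‖x‖ * ‖a‖) ^ 2 := by rw [h3]; ring
  exact (pow_le_pow_iff_left₀ (norm_nonneg _) (by positivity) two_ne_zero).mp h4

/-- `a ↦ x <• a` as a continuous linear map. -/
def smulCLM (x : E) : A →L[ℂ] E :=
  LinearMap.mkContinuous
    { toFun := fun a => x <• a
      map_add' := op_smul_add x
      map_smul' := op_smul_csmul x } ‖x‖
    (fun a => by simpa [mul_comm] using norm_op_smul_le x a)

@[simp] lemma smulCLM_apply (x : E) (a : A) : smulCLM x a = x <• a := rfl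

/-- The rank-one operator `θ_{x,y}` as a continuous linear map. -/
def rankOne (x y : E) : E →L[ℂ] E := (smulCLM x).comp (RightCStarModule.innerSL (A := A) y)

@[simp] lemma rankOne_apply (x y z : E) : rankOne (A := A) x y z = x <• ⟪y, z⟫ := rfl

lemma rankOne_mem (x y : E) : rankOne (A := A) x y ∈ compactOperators A E :=
  subset_closure (Submodule.subset_span ⟨x, y, fun _ => rfl⟩)

/-- The key approximation: `x <• aₙ → x` for a suitable sequence `aₙ` built from the
functional calculus of `⟪x, x⟫`, where each `x <• aₙ` lies in the "range" of the rank-one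
operator `θ_{x,x}`. -/
lemma approx (x : E) (n : ℕ) :
    ∃ a : A,
      (x <• a = ((n : ℝ) + 1) • (x <• ⟪x, x⟫) - ((n : ℝ) + 1) • (x <• ⟪x, x <• a⟫)) ∧
      ‖x <• a - x‖ ^ 2 ≤ ((n : ℝ) + 1)⁻¹ := by
  set m : ℝ := (n : ℝ) + 1 with hm
  have hm0 : 0 < m := by positivity
  set b : A := ⟪x, x⟫ with hbdef
  have hb : IsSelfAdjoint b := RightCStarModule.isSelfAdjoint_inner_self
  have hb0 : (0 : A) ≤ b := RightCStarModule.inner_self_nonneg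
  have hsp : ∀ t ∈ quasispectrum ℝ b, 0 ≤ t := quasispectrum_nonneg_of_nonneg b hb0
  set f : ℝ → ℝ := fun t => m * t / (m * t + 1) with hfdef
  have hden : ∀ t ∈ quasispectrum ℝ b, m * t + 1 ≠ 0 := fun t ht => by
    have := hsp t ht; positivity
  have hfc : ContinuousOn f (quasispectrum ℝ b) :=
    ContinuousOn.div (by fun_prop) (by fun_prop) hden
  have hf0 : f 0 = 0 := by simp [hfdef]
  set a : A := cfcₙ f b with hadef
  have ha : IsSelfAdjoint a := cfcₙ_predicate f b
  -- basic cfc computations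
  have e1 : cfcₙ (fun t => t * f t) b = b * a := by
    rw [cfcₙ_mul _ f b (by fun_prop) (by simp) hfc hf0, cfcₙ_id' ℝ b]
  have e1' : cfcₙ (fun t => f t * t) b = a * b := by
    rw [cfcₙ_mul f _ b hfc hf0 (by fun_prop) (by simp), cfcₙ_id' ℝ b]
  have hxa : ⟪x, x <• a⟫ = b * a := by
    rw [RightCStarModule.inner_op_smul_right]
  have c0 : ContinuousOn (fun t : ℝ => t) (quasispectrum ℝ b) := by fun_prop
  have c1 : ContinuousOn (fun t => f t * t) (quasispectrum ℝ b) := hfc.mul c0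
  have c2 : ContinuousOn (fun t => t * f t) (quasispectrum ℝ b) := c0.mul hfc
  have c3 : ContinuousOn (fun t => f t * t * f t) (quasispectrum ℝ b) := c1.mul hfc
  have c4 : ContinuousOn (fun t => f t * t * f t - f t * t) (quasispectrum ℝ b) := c3.sub c1
  have c5 : ContinuousOn (fun t => f t * t * f t - f t * t - t * f t) (quasispectrum ℝ b) :=
    c4.sub c2
  refine ⟨a, ?_, ?_⟩
  · rw [hxa, ← op_smul_rsmul, ← op_smul_rsmul, ← op_smul_sub]
    refine congrArg (fun c : A => x <• c) ?_
    have e4 : a = cfcₙ (fun t => m * t - m * (t * f t)) b := by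
      refine (cfcₙ_congr fun t ht => ?_).symm
      have h0 := hsp t ht
      have h1 := hden t ht
      show m * t - m * (t * f t) = f t
      rw [hfdef]
      field_simp
      ring
    have e2 : cfcₙ (fun t => m * t) b = m • b := cfcₙ_const_mul_id m b
    have e3 : cfcₙ (fun t => m * (t * f t)) b = m • (b * a) := by
      rw [cfcₙ_const_mul m _ b c2 (by simp [hf0]), e1]
    calc a = cfcₙ (fun t => m * t - m * (t * f t)) b := e4
      _ = m • b - m • (b * a) := by
          rw [cfcₙ_sub _ _ b (by fun_prop) (by simp) (c2.const_smul m |>.congr ?_) (by simp [hf0]),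
            e2, e3]
          intro t ht
          simp [smul_eq_mul]
  · have hinner : ⟪x <• a - x, x <• a - x⟫ = a * b * a - a * b - b * a + b := by
      simp only [RightCStarModule.inner_sub_right, RightCStarModule.inner_sub_left,
        RightCStarModule.inner_op_smul_right, RightCStarModule.inner_op_smul_left, ha.star_eq, ← hbdef]
      noncomm_ring
    have e5 : cfcₙ (fun t => f t * t * f t) b = a * b * a := by
      rw [cfcₙ_mul _ f b c1 (by simp [hf0]) hfc hf0, e1']
    have hcalc : a * b * a - a * b - b * a + b
        = cfcₙ (fun t => f t * t * f t - f t * t - t * f t + t) b := by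
      rw [cfcₙ_add _ _ b c5 (by simp [hf0]) c0 (by simp),
        cfcₙ_sub _ _ b c4 (by simp [hf0]) c2 (by simp [hf0]),
        cfcₙ_sub _ _ b c3 (by simp [hf0]) c1 (by simp [hf0]),
        e5, e1, e1', cfcₙ_id' ℝ b]
    have hbnd : ‖cfcₙ (fun t => f t * t * f t - f t * t - t * f t + t) b‖ ≤ m⁻¹ := by
      refine norm_cfcₙ_le fun t ht => ?_
      have ht0 := hsp t ht
      have hd : 0 < m * t + 1 := by positivity
      have hval : f t * t * f t - f t * t - t * f t + t = t / (m * t + 1) ^ 2 := by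
        rw [hfdef]; field_simp; ring
      rw [hval, Real.norm_eq_abs, abs_of_nonneg (by positivity), div_le_iff₀ (by positivity),
        inv_mul_eq_div, le_div_iff₀ hm0]
      nlinarith
    calc ‖x <• a - x‖ ^ 2 = ‖⟪x <• a - x, x <• a - x⟫‖ := RightCStarModule.norm_sq_eq
      _ ≤ m⁻¹ := by rw [hinner, hcalc]; exact hbnd

end MyAux

/-- If `K(H)` has a (multiplicative) identity, then the Hilbert `A`-module `H` is
algebraically finitely generated: there are `ξ₁, …, ξₙ ∈ H` with `H = ∑ᵢ ξᵢ·A`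
(no closure taken). -/
theorem stmt6 {A E : Type*} [NonUnitalCStarAlgebra A] [PartialOrder A] [StarOrderedRing A]
    [NormedAddCommGroup E] [NormedSpace ℂ E] [SMul Aᵐᵒᵖ E] [RightCStarModule A E] [CompleteSpace E]
    (hunit : ∃ e ∈ compactOperators A E, ∀ T ∈ compactOperators A E,
      e * T = T ∧ T * e = T) :
    ∃ (n : ℕ) (ξ : Fin n → E), ∀ h : E, ∃ a : Fin n → A, h = ∑ i, ξ i <• a i := by
  obtain ⟨e, he, hid⟩ := hunit
  -- Step 1: `e` acts as the identity on `E`.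
  have hfix : ∀ z : E, e z = z := by
    intro x
    have hfixT : ∀ v : E, e (x <• inner A x v) = x <• inner A x v := by
      intro v
      have h := (hid _ (MyAux.rankOne_mem (A := A) x x)).1
      calc e (x <• inner A x v) = (e * MyAux.rankOne (A := A) x x) v := rfl
        _ = MyAux.rankOne (A := A) x x v := by rw [h]
        _ = x <• inner A x v := rfl
    have key : ∀ n : ℕ, ∃ w : E, e w = w ∧ ‖w - x‖ ^ 2 ≤ ((n : ℝ) + 1)⁻¹ := by
      intro n
      obtain ⟨a, hrep, hnorm⟩ := MyAux.approx x n
      refine ⟨x <• a, ?_, hnorm⟩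
      have ms : ∀ (r : ℝ) (v : E), e (r • v) = r • e v := fun r v =>
        e.map_smul_of_tower r v
      rw [hrep, map_sub, ms, ms, hfixT x, hfixT (x <• a), ← hrep]
    have big : ∀ n : ℕ, ‖e x - x‖ ≤ (‖e‖ + 1) * Real.sqrt ((n : ℝ) + 1)⁻¹ := by
      intro n
      obtain ⟨w, hw, hn⟩ := key n
      have hwx : ‖w - x‖ ≤ Real.sqrt ((n : ℝ) + 1)⁻¹ := by
        rw [← Real.sqrt_sq (norm_nonneg (w - x))]
        exact Real.sqrt_le_sqrt hn
      calc ‖e x - x‖ = ‖e (x - w) + (w - x)‖ := by rw [map_sub, hw]; congr 1; abel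
        _ ≤ ‖e (x - w)‖ + ‖w - x‖ := norm_add_le _ _
        _ ≤ ‖e‖ * ‖x - w‖ + ‖w - x‖ := by gcongr; exact e.le_opNorm _
        _ = (‖e‖ + 1) * ‖w - x‖ := by rw [norm_sub_rev x w]; ring
        _ ≤ (‖e‖ + 1) * Real.sqrt ((n : ℝ) + 1)⁻¹ := by gcongr
    have htend : Filter.Tendsto (fun n : ℕ => (‖e‖ + 1) * Real.sqrt ((n : ℝ) + 1)⁻¹)
        Filter.atTop (nhds 0) := by
      rw [show (0 : ℝ) = (‖e‖ + 1) * Real.sqrt 0 by simp]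
      refine Filter.Tendsto.const_mul _ ((Real.continuous_sqrt.tendsto 0).comp ?_)
      simpa [one_div] using tendsto_one_div_add_atTop_nhds_zero_nat (𝕜 := ℝ)
    have h0 : ‖e x - x‖ ≤ 0 := ge_of_tendsto' htend big
    have := norm_le_zero_iff.mp h0
    exact sub_eq_zero.mp this
  have he1 : e = 1 := ContinuousLinearMap.ext fun z => hfix z
  -- Step 2: pick `S` in the algebraic span close to `e`; it is invertible.
  obtain ⟨S, hSmem, hdist⟩ := Metric.mem_closure_iff.mp he 1 one_pos
  have hSmem' : S ∈ Submodule.span ℂ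
      {T : E →L[ℂ] E | ∃ x y : E, ∀ z, T z = x <• inner A y z} := hSmem
  obtain ⟨n, c, g, hsum⟩ := Submodule.mem_span_set'.mp hSmem'
  choose xs ys hg using fun i => (g i).2
  refine ⟨n, fun i => c i • xs i, fun h => ?_⟩
  have hlt : ‖(1 : E →L[ℂ] E) - S‖ < 1 := by
    rw [← he1, ← dist_eq_norm]
    exact hdist
  let u : (E →L[ℂ] E)ˣ := Units.oneSub ((1 : E →L[ℂ] E) - S) hlt
  have huval : (u : E →L[ℂ] E) = S := by simp [u, Units.oneSub]
  set w : E := (↑u⁻¹ : E →L[ℂ] E) h with hwdef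
  have hh : S w = h := by
    calc S w = ((u : E →L[ℂ] E) * (↑u⁻¹ : E →L[ℂ] E)) h := by
          rw [huval]; rfl
      _ = h := by rw [u.mul_inv]; rfl
  refine ⟨fun i => inner A (ys i) w, ?_⟩
  calc h = S w := hh.symm
    _ = ∑ i, c i • ((g i : E →L[ℂ] E) w) := by
        rw [← hsum]
        simp [ContinuousLinearMap.sum_apply, ContinuousLinearMap.smul_apply]
    _ = ∑ i, (c i • xs i) <• inner A (ys i) w := by
        refine Finset.sum_congr rfl fun i _ => ?_
        rw [hg i w, MyAux.csmul_op_smul]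

end
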